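/- Let μ be a positive measure on ℝ with moments s_n of all orders and infinite support, with orthonormal polynomials P_n(x) = Σ_{k≤n} b_{k,n} x^k. Then the smallest eigenvalues λ_N of the Hankel matrices H_N = (s_{n+m})_{n,m≤N} are bounded below by a constant c > 0 for all N if and only if the infinite upper triangular matrix B = (b_{k,n}) defines a bounded operator on ℓ² with norm at most 1/√c. -/

import Mathlib

open MeasureTheory Polynomial Finset

noncomputable section HankelAux

namespace HankelAux

abbrev L2 := lp (fun _ : ℕ => ℝ) 2

def sgl (n : ℕ) : L2 := lp.single 2 n (1 : ℝ)

def elt (f : ℕ → ℝ) (t : Finset ℕ) : L2 := ∑ n ∈ t, f n • sgl n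

lemma sgl_apply (n k : ℕ) : (sgl n : ∀ _ : ℕ, ℝ) k = if k = n then 1 else 0 := by
  by_cases h : k = n
  · subst h; rw [sgl, lp.single_apply_self]; simp
  · rw [sgl, lp.single_apply_ne 2 n _ h]; simp [h]

lemma elt_apply (f : ℕ → ℝ) (t : Finset ℕ) (k : ℕ) :
    (elt f t : ∀ _ : ℕ, ℝ) k = if k ∈ t then f k else 0 := by
  rw [elt, lp.coeFn_sum]
  simp only [Finset.sum_apply, lp.coeFn_smul, Pi.smul_apply, smul_eq_mul]
  have h1 : ∀ n ∈ t, f n * (sgl n : ∀ _ : ℕ, ℝ) k = if k = n then f n else 0 := by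
    intro n _
    rw [sgl_apply]
    by_cases h : k = n <;> simp [h]
  rw [Finset.sum_congr rfl h1, Finset.sum_ite_eq t k f]

lemma norm_elt_sq (f : ℕ → ℝ) (t : Finset ℕ) :
    ‖elt f t‖ ^ 2 = ∑ n ∈ t, f n ^ 2 := by
  rw [← real_inner_self_eq_norm_sq]
  rw [elt, sum_inner]
  have h1 : ∀ n ∈ t, (inner ℝ (f n • sgl n) (∑ m ∈ t, f m • sgl m) : ℝ) = f n ^ 2 := by
    intro n hn
    rw [real_inner_smul_left, sgl, lp.inner_single_left]
    have h2 : ((∑ m ∈ t, f m • sgl m : L2) : ∀ _ : ℕ, ℝ) n = f n := by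
      have := elt_apply f t n
      rw [elt] at this
      rw [this, if_pos hn]
    simp only [RCLike.inner_apply, starRingEnd_apply, star_one, one_mul]
    rw [h2]; ring
  rw [Finset.sum_congr rfl h1]

lemma integrable_eval (μ : Measure ℝ) (hmom : ∀ n : ℕ, Integrable (fun x => x ^ n) μ)
    (p : Polynomial ℝ) : Integrable (fun x => p.eval x) μ := by
  have h : (fun x : ℝ => p.eval x)
      = fun x => ∑ i ∈ range (p.natDegree + 1), p.coeff i * x ^ i := by
    funext x; exact p.eval_eq_sum_range x
  rw [h]
  exact integrable_finset_sum _ fun i _ => (hmom i).const_mul _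

lemma integrable_eval_mul (μ : Measure ℝ) (hmom : ∀ n : ℕ, Integrable (fun x => x ^ n) μ)
    (p q : Polynomial ℝ) : Integrable (fun x => p.eval x * q.eval x) μ := by
  have h : (fun x : ℝ => p.eval x * q.eval x) = fun x => (p * q).eval x := by
    funext x; rw [eval_mul]
  rw [h]; exact integrable_eval μ hmom _

lemma hankel_eq_integral (μ : Measure ℝ) (hmom : ∀ n : ℕ, Integrable (fun x => x ^ n) μ)
    (s : ℕ → ℝ) (hs : ∀ n, s n = ∫ x, x ^ n ∂μ)
    (p : Polynomial ℝ) (M : ℕ) (hM : p.natDegree < M) :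
    ∑ i ∈ range M, ∑ j ∈ range M, s (i + j) * p.coeff i * p.coeff j
      = ∫ x, (p.eval x) ^ 2 ∂μ := by
  have hev : (fun x : ℝ => (p.eval x) ^ 2)
      = fun x => ∑ i ∈ range M, ∑ j ∈ range M, p.coeff i * p.coeff j * x ^ (i + j) := by
    funext x
    rw [sq, p.eval_eq_sum_range' hM, Finset.sum_mul_sum]
    refine Finset.sum_congr rfl fun i _ => Finset.sum_congr rfl fun j _ => ?_
    rw [pow_add]; ring
  rw [hev, integral_finset_sum]
  · refine Finset.sum_congr rfl fun i _ => ?_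
    rw [integral_finset_sum]
    · refine Finset.sum_congr rfl fun j _ => ?_
      rw [integral_const_mul _ _, ← hs]; ring
    · exact fun j _ => (hmom (i + j)).const_mul _
  · exact fun i _ => integrable_finset_sum _ fun j _ => (hmom (i + j)).const_mul _

lemma integral_sq_expansion (μ : Measure ℝ) (hmom : ∀ n : ℕ, Integrable (fun x => x ^ n) μ)
    (P : ℕ → Polynomial ℝ)
    (horth : ∀ n m, ∫ x, (P n).eval x * (P m).eval x ∂μ = if n = m then 1 else 0)
    (t : Finset ℕ) (β : ℕ → ℝ) :
    ∫ x, ((∑ n ∈ t, C (β n) * P n).eval x) ^ 2 ∂μ = ∑ n ∈ t, (β n) ^ 2 := by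
  have hev : (fun x : ℝ => ((∑ n ∈ t, C (β n) * P n).eval x) ^ 2)
      = fun x => ∑ n ∈ t, ∑ m ∈ t, (β n * β m) * ((P n).eval x * (P m).eval x) := by
    funext x
    rw [sq]
    simp only [eval_finset_sum, eval_mul, eval_C, Finset.sum_mul_sum]
    exact Finset.sum_congr rfl fun n _ => Finset.sum_congr rfl fun m _ => by ring
  rw [hev, integral_finset_sum]
  · refine Finset.sum_congr rfl fun n hn => ?_
    rw [integral_finset_sum]
    · have h1 : ∀ m ∈ t, (∫ x, (β n * β m) * ((P n).eval x * (P m).eval x) ∂μ)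
          = if n = m then β n * β m else 0 := by
        intro m _
        rw [integral_const_mul, horth]
        by_cases h : n = m <;> simp [h]
      rw [Finset.sum_congr rfl h1, Finset.sum_ite_eq t n (fun m => β n * β m), if_pos hn, sq]
    · exact fun m _ => (integrable_eval_mul μ hmom _ _).const_mul _
  · exact fun n _ => integrable_finset_sum _ fun m _ => (integrable_eval_mul μ hmom _ _).const_mul _

lemma exists_expansion (P : ℕ → Polynomial ℝ)
    (hdeg : ∀ n, (P n).natDegree = n) (hlead : ∀ n, 0 < (P n).leadingCoeff) :
    ∀ m (p : Polynomial ℝ), (p = 0 ∨ p.natDegree < m) →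
      ∃ β : ℕ → ℝ, p = ∑ n ∈ range m, C (β n) * P n := by
  intro m
  induction m with
  | zero =>
    intro p hp
    rcases hp with rfl | h
    · exact ⟨0, by simp⟩
    · omega
  | succ m ih =>
    intro p hp
    rcases hp with rfl | h
    · exact ⟨0, by simp⟩
    have hPm : (P m).coeff m ≠ 0 := by
      have := hlead m
      rw [Polynomial.leadingCoeff, hdeg m] at this
      exact ne_of_gt this
    set γ := p.coeff m / (P m).coeff m with hγ
    set q := p - C γ * P m with hq
    have hqm : q.coeff m = 0 := by
      simp [hq, hγ, Polynomial.coeff_sub, Polynomial.coeff_C_mul]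
      field_simp
      ring
    have hqdeg : q = 0 ∨ q.natDegree < m := by
      by_cases h0 : q = 0
      · exact Or.inl h0
      right
      have hle : q.natDegree ≤ m := by
        apply le_trans (Polynomial.natDegree_sub_le _ _)
        simp only [max_le_iff]
        constructor
        · omega
        · exact le_trans (Polynomial.natDegree_C_mul_le _ _) (le_of_eq (hdeg m))
      rcases lt_or_eq_of_le hle with h' | h'
      · exact h'
      · exfalso
        have := Polynomial.leadingCoeff_ne_zero.mpr h0
        rw [Polynomial.leadingCoeff, h'] at this
        exact this hqm
    obtain ⟨β, hβ⟩ := ih q hqdeg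
    refine ⟨Function.update β m γ, ?_⟩
    rw [Finset.sum_range_succ, Function.update_self]
    have : ∑ n ∈ range m, C (Function.update β m γ n) * P n
        = ∑ n ∈ range m, C (β n) * P n := by
      refine Finset.sum_congr rfl fun n hn => ?_
      rw [Function.update_of_ne (by simp at hn; omega)]
    rw [this, ← hβ, hq]
    ring

lemma key_ineq (s : ℕ → ℝ) (lam : ℕ → ℝ)
    (hlam : ∀ N, IsLeast {r : ℝ | ∃ a : Fin (N + 1) → ℝ,
        (∑ i : Fin (N + 1), (a i) ^ 2) = 1 ∧
        r = ∑ i : Fin (N + 1), ∑ j : Fin (N + 1), s ((i : ℕ) + (j : ℕ)) * a i * a j}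
      (lam N))
    (c : ℝ) (h : ∀ N, c ≤ lam N) (N : ℕ) (b : ℕ → ℝ) :
    c * ∑ k ∈ range (N + 1), b k ^ 2
      ≤ ∑ i ∈ range (N + 1), ∑ j ∈ range (N + 1), s (i + j) * b i * b j := by
  set t2 := ∑ k ∈ range (N + 1), b k ^ 2 with ht2
  have ht2nn : 0 ≤ t2 := Finset.sum_nonneg fun k _ => sq_nonneg _
  rcases eq_or_lt_of_le ht2nn with h0 | hpos
  · have hb : ∀ k ∈ range (N + 1), b k = 0 := by
      intro k hk
      have := (Finset.sum_eq_zero_iff_of_nonneg fun k _ => sq_nonneg (b k)).mp h0.symm k hk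
      exact pow_eq_zero_iff (n := 2) (by norm_num) |>.mp this
    rw [← h0, mul_zero]
    refine Finset.sum_nonneg fun i hi => Finset.sum_nonneg fun j hj => ?_
    rw [hb i hi]; simp
  · set t := Real.sqrt t2 with htdef
    have htpos : 0 < t := Real.sqrt_pos.mpr hpos
    have htt : t * t = t2 := Real.mul_self_sqrt ht2nn
    set a : Fin (N + 1) → ℝ := fun i => b i / t with ha
    have h1 : (∑ i : Fin (N + 1), (a i) ^ 2) = 1 := by
      have e1 : (∑ i : Fin (N + 1), (a i) ^ 2)
          = ∑ i ∈ range (N + 1), (b i / t) ^ 2 :=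
        Fin.sum_univ_eq_sum_range (fun i => (b i / t) ^ 2) (N + 1)
      have e2 : ∀ i ∈ range (N + 1), (b i / t) ^ 2 = b i ^ 2 / t2 := by
        intro i _; rw [div_pow, show t ^ 2 = t2 by rw [sq, htt]]
      rw [e1, Finset.sum_congr rfl e2, ← Finset.sum_div, ← ht2, div_self (ne_of_gt hpos)]
    have hmem : (∑ i : Fin (N + 1), ∑ j : Fin (N + 1), s ((i : ℕ) + (j : ℕ)) * a i * a j)
        ∈ {r : ℝ | ∃ a : Fin (N + 1) → ℝ,
          (∑ i : Fin (N + 1), (a i) ^ 2) = 1 ∧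
          r = ∑ i : Fin (N + 1), ∑ j : Fin (N + 1), s ((i : ℕ) + (j : ℕ)) * a i * a j} :=
      ⟨a, h1, rfl⟩
    have hcr : c ≤ ∑ i : Fin (N + 1), ∑ j : Fin (N + 1), s ((i : ℕ) + (j : ℕ)) * a i * a j :=
      le_trans (h N) ((hlam N).2 hmem)
    have e3 : (∑ i : Fin (N + 1), ∑ j : Fin (N + 1), s ((i : ℕ) + (j : ℕ)) * a i * a j)
        = (∑ i ∈ range (N + 1), ∑ j ∈ range (N + 1), s (i + j) * b i * b j) / t2 := by
      have e4 : (∑ i : Fin (N + 1), ∑ j : Fin (N + 1), s ((i : ℕ) + (j : ℕ)) * a i * a j)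
          = ∑ i ∈ range (N + 1), ∑ j ∈ range (N + 1), s (i + j) * (b i / t) * (b j / t) := by
        rw [← Fin.sum_univ_eq_sum_range
          (fun i => ∑ j ∈ range (N + 1), s (i + j) * (b i / t) * (b j / t)) (N + 1)]
        refine Finset.sum_congr rfl fun i _ => ?_
        exact Fin.sum_univ_eq_sum_range (fun j => s ((i : ℕ) + j) * (b i / t) * (b j / t)) (N + 1)
      rw [e4, Finset.sum_div]
      refine Finset.sum_congr rfl fun i _ => ?_
      rw [Finset.sum_div]
      refine Finset.sum_congr rfl fun j _ => ?_
      rw [show (t2 : ℝ) = t ^ 2 by rw [sq, htt]]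
      field_simp
    rw [e3] at hcr
    calc c * t2
        ≤ ((∑ i ∈ range (N + 1), ∑ j ∈ range (N + 1), s (i + j) * b i * b j) / t2) * t2 :=
          mul_le_mul_of_nonneg_right hcr ht2nn
      _ = _ := by field_simp

lemma coeff_bound (μ : Measure ℝ) (hmom : ∀ n : ℕ, Integrable (fun x => x ^ n) μ)
    (s : ℕ → ℝ) (hs : ∀ n, s n = ∫ x, x ^ n ∂μ)
    (lam : ℕ → ℝ)
    (hlam : ∀ N, IsLeast {r : ℝ | ∃ a : Fin (N + 1) → ℝ,
        (∑ i : Fin (N + 1), (a i) ^ 2) = 1 ∧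
        r = ∑ i : Fin (N + 1), ∑ j : Fin (N + 1), s ((i : ℕ) + (j : ℕ)) * a i * a j}
      (lam N))
    (c : ℝ) (h : ∀ N, c ≤ lam N)
    (p : Polynomial ℝ) (M : ℕ) (hM : p.natDegree < M) :
    c * ∑ k ∈ range M, p.coeff k ^ 2 ≤ ∫ x, (p.eval x) ^ 2 ∂μ := by
  obtain ⟨N, rfl⟩ : ∃ N, M = N + 1 := ⟨M - 1, by omega⟩
  rw [← hankel_eq_integral μ hmom s hs p (N + 1) hM]
  exact key_ineq s lam hlam c h N p.coeff

end HankelAux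

end HankelAux

open HankelAux

/-- The smallest Hankel eigenvalues are bounded below by `c > 0` iff the upper triangular
coefficient matrix `B = (b_{k,n})` of the orthonormal polynomials defines a bounded
operator on `ℓ²` of norm at most `1/√c`. -/
theorem eigenvalue_lower_bound_iff_bounded_operator
    (μ : Measure ℝ)
    (hmom : ∀ n : ℕ, Integrable (fun x => x ^ n) μ)
    (hsupp : ∀ p : Polynomial ℝ, p ≠ 0 → 0 < ∫ x, (p.eval x) ^ 2 ∂μ)
    (s : ℕ → ℝ) (hs : ∀ n, s n = ∫ x, x ^ n ∂μ)
    (P : ℕ → Polynomial ℝ)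
    (hdeg : ∀ n, (P n).natDegree = n)
    (hlead : ∀ n, 0 < (P n).leadingCoeff)
    (horth : ∀ n m, ∫ x, (P n).eval x * (P m).eval x ∂μ = if n = m then 1 else 0)
    (lam : ℕ → ℝ)
    (hlam : ∀ N, IsLeast {r : ℝ | ∃ a : Fin (N + 1) → ℝ,
        (∑ i : Fin (N + 1), (a i) ^ 2) = 1 ∧
        r = ∑ i : Fin (N + 1), ∑ j : Fin (N + 1), s ((i : ℕ) + (j : ℕ)) * a i * a j}
      (lam N))
    (c : ℝ) (hc : 0 < c) :
    (∀ N, c ≤ lam N) ↔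
      ∃ T : lp (fun _ : ℕ => ℝ) 2 →L[ℝ] lp (fun _ : ℕ => ℝ) 2,
        ‖T‖ ≤ 1 / Real.sqrt c ∧
        ∀ k n : ℕ, (T (lp.single 2 n 1) : ∀ _ : ℕ, ℝ) k = (P n).coeff k := by
  classical
  constructor
  · intro h
    set Bcol : ℕ → L2 := fun n => elt (fun k => (P n).coeff k) (range (n + 1)) with hBcoldef
    have hBcol : ∀ n k, (Bcol n : ∀ _ : ℕ, ℝ) k = (P n).coeff k := by
      intro n k
      rw [hBcoldef, elt_apply]
      by_cases hk : k ∈ range (n + 1)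
      · rw [if_pos hk]
      · rw [if_neg hk]
        symm
        apply Polynomial.coeff_eq_zero_of_natDegree_lt
        rw [hdeg n]
        simp only [Finset.mem_range, not_lt] at hk
        omega
    set g : (ℕ →₀ ℝ) →ₗ[ℝ] L2 := Finsupp.linearCombination ℝ Bcol with hgdef
    set eL : (ℕ →₀ ℝ) →ₗ[ℝ] L2 := Finsupp.linearCombination ℝ sgl with heLdef
    have heL : ∀ a : ℕ →₀ ℝ, eL a = elt a a.support := by
      intro a
      rw [heLdef, Finsupp.linearCombination_apply, Finsupp.sum, elt]
    have hgform : ∀ a : ℕ →₀ ℝ, g a = ∑ n ∈ a.support, a n • Bcol n := by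
      intro a; rw [hgdef, Finsupp.linearCombination_apply, Finsupp.sum]
    have heLapp : ∀ (a : ℕ →₀ ℝ) (k : ℕ), (eL a : ∀ _ : ℕ, ℝ) k = a k := by
      intro a k
      rw [heL a, elt_apply]
      by_cases hk : k ∈ a.support
      · rw [if_pos hk]
      · rw [if_neg hk]; exact (Finsupp.notMem_support_iff.mp hk).symm
    have hinj : Function.Injective eL := by
      intro x y hxy
      ext k
      rw [← heLapp x k, ← heLapp y k, hxy]
    have hgapp : ∀ (a : ℕ →₀ ℝ) (k : ℕ), (g a : ∀ _ : ℕ, ℝ) k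
        = ∑ n ∈ a.support, a n * (P n).coeff k := by
      intro a k
      rw [hgform a, lp.coeFn_sum]
      simp only [Finset.sum_apply, lp.coeFn_smul, Pi.smul_apply, smul_eq_mul]
      exact Finset.sum_congr rfl fun n _ => by rw [hBcol]
    have hsqrtc : 0 < Real.sqrt c := Real.sqrt_pos.mpr hc
    have hbound : ∀ a : ℕ →₀ ℝ, ‖g a‖ ≤ (1 / Real.sqrt c) * ‖eL a‖ := by
      intro a
      set p : Polynomial ℝ := ∑ n ∈ a.support, Polynomial.C (a n) * P n with hpdef
      set M := a.support.sup id + 1 with hMdef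
      have hdegp : p.natDegree < M := by
        have : p.natDegree ≤ a.support.sup id := by
          apply Polynomial.natDegree_sum_le_of_forall_le
          intro n hn
          refine le_trans (Polynomial.natDegree_C_mul_le _ _) ?_
          rw [hdeg n]
          exact Finset.le_sup (f := id) hn
        omega
      have hpk : ∀ k, p.coeff k = ∑ n ∈ a.support, a n * (P n).coeff k := by
        intro k
        rw [hpdef, Polynomial.finset_sum_coeff]
        exact Finset.sum_congr rfl fun n _ => by rw [Polynomial.coeff_C_mul]
      have hga : g a = elt p.coeff (range M) := by
        apply lp.ext
        funext k
        rw [hgapp, elt_apply]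
        by_cases hk : k ∈ range M
        · rw [if_pos hk, hpk]
        · rw [if_neg hk]
          refine Finset.sum_eq_zero fun n hn => ?_
          have hnk : (P n).natDegree < k := by
            rw [hdeg n]
            simp only [Finset.mem_range, not_lt] at hk
            have := Finset.le_sup (f := id) hn
            simp only [id] at this
            omega
          rw [Polynomial.coeff_eq_zero_of_natDegree_lt hnk, mul_zero]
      have h2 : ‖g a‖ ^ 2 ≤ (1 / c) * ‖eL a‖ ^ 2 := by
        rw [hga, norm_elt_sq, heL a, norm_elt_sq]
        have h3 := coeff_bound μ hmom s hs lam hlam c h p M hdegp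
        have h4 : (∫ x, (p.eval x) ^ 2 ∂μ) = ∑ n ∈ a.support, ((a : ℕ → ℝ) n) ^ 2 := by
          rw [hpdef]; exact integral_sq_expansion μ hmom P horth a.support a
        rw [h4] at h3
        rw [div_mul_eq_mul_div, one_mul, le_div_iff₀ hc, mul_comm]
        exact h3
      have hn1 : (0 : ℝ) ≤ (1 / Real.sqrt c) * ‖eL a‖ := by positivity
      have h5 : ‖g a‖ ^ 2 ≤ ((1 / Real.sqrt c) * ‖eL a‖) ^ 2 := by
        rw [mul_pow, div_pow, one_pow, Real.sq_sqrt hc.le]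
        exact h2
      exact (pow_le_pow_iff_left₀ (norm_nonneg _) hn1 two_ne_zero).mp h5
    set Y : Submodule ℝ L2 := LinearMap.range eL with hY
    set eqv := LinearEquiv.ofInjective eL hinj with heqv
    set f₀ : Y →ₗ[ℝ] L2 := g.comp (eqv.symm : Y →ₗ[ℝ] (ℕ →₀ ℝ)) with hf₀def
    have heqsymm : ∀ y : Y, eL (eqv.symm y) = (y : L2) := by
      intro y
      conv_rhs => rw [← eqv.apply_symm_apply y]
      rw [heqv, LinearEquiv.ofInjective_apply]
    have hf₀app : ∀ y : Y, f₀ y = g (eqv.symm y) := fun y => rfl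
    have hf₀bound : ∀ y : Y, ‖f₀ y‖ ≤ (1 / Real.sqrt c) * ‖y‖ := by
      intro y
      rw [hf₀app]
      calc ‖g (eqv.symm y)‖ ≤ (1 / Real.sqrt c) * ‖eL (eqv.symm y)‖ := hbound _
        _ = (1 / Real.sqrt c) * ‖y‖ := by rw [heqsymm y]; rfl
    set fc : Y →L[ℝ] L2 := f₀.mkContinuous (1 / Real.sqrt c) hf₀bound with hfcdef
    set e' : Y →L[ℝ] L2 := Y.subtypeL with he'def
    have h_e : ∀ x : Y, ‖x‖ ≤ ((1 : NNReal) : ℝ) * ‖e' x‖ := by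
      intro x
      simp [he'def]
    have h_dense : DenseRange e' := by
      have hr : Set.range (e' : Y → L2) = (Y : Set L2) := Subtype.range_coe
      rw [DenseRange, hr]
      intro x
      have hsum := lp.hasSum_single (E := fun _ : ℕ => ℝ) ENNReal.ofNat_ne_top x
      refine mem_closure_of_tendsto hsum ?_
      filter_upwards with t
      refine Submodule.sum_mem Y fun n _ => ?_
      refine LinearMap.mem_range.mpr ⟨Finsupp.single n (x n), ?_⟩
      rw [heLdef, Finsupp.linearCombination_single, sgl, ← lp.single_smul]
      congr 1
      simp
    refine ⟨ContinuousLinearMap.extend fc e', ?_, ?_⟩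
    · calc ‖_‖ ≤ ((1 : NNReal) : ℝ) * ‖fc‖ :=
            ContinuousLinearMap.opNorm_extend_le (f := fc) (e := e') h_dense h_e
        _ = ‖fc‖ := by rw [NNReal.coe_one, one_mul]
        _ ≤ 1 / Real.sqrt c :=
            LinearMap.mkContinuous_norm_le f₀ (by positivity) hf₀bound
    · intro k n
      have heLsingle : eL (Finsupp.single n 1) = sgl n := by
        rw [heLdef, Finsupp.linearCombination_single, one_smul]
      have hmem : sgl n ∈ Y := LinearMap.mem_range.mpr ⟨Finsupp.single n 1, heLsingle⟩
      have hsingle : (lp.single 2 n 1 : L2) = e' ⟨sgl n, hmem⟩ := rfl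
      rw [hsingle, ContinuousLinearMap.extend_eq (f := fc) (e := e') h_dense
        (ContinuousLinearMap.isUniformEmbedding_of_bound e' h_e).isUniformInducing]
      have hfc : fc ⟨sgl n, hmem⟩ = g (eqv.symm ⟨sgl n, hmem⟩) := rfl
      have hsymm : eqv.symm ⟨sgl n, hmem⟩ = Finsupp.single n 1 := by
        apply hinj
        rw [heqsymm, heLsingle]
      rw [hfc, hsymm, hgdef, Finsupp.linearCombination_single, one_smul]
      exact hBcol n k
  · intro hT N
    obtain ⟨T, hTnorm, hTval⟩ := hT
    obtain ⟨⟨a, ha1, hval⟩, -⟩ := hlam N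
    set a' : ℕ → ℝ := fun n => if hn : n < N + 1 then a ⟨n, hn⟩ else 0 with ha'
    set p : Polynomial ℝ := ∑ i ∈ range (N + 1), Polynomial.C (a' i) * Polynomial.X ^ i
      with hpdef
    have hcoeff : ∀ k, p.coeff k = a' k := by
      intro k
      rw [hpdef, Polynomial.finset_sum_coeff]
      have h1 : ∀ i ∈ range (N + 1), (Polynomial.C (a' i) * Polynomial.X ^ i).coeff k
          = if i = k then a' i else 0 := by
        intro i _
        rw [Polynomial.coeff_C_mul, Polynomial.coeff_X_pow]
        by_cases h : i = k
        · rw [if_pos h, if_pos h.symm, mul_one]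
        · rw [if_neg h, if_neg (Ne.symm h), mul_zero]
      rw [Finset.sum_congr rfl h1, Finset.sum_ite_eq' (range (N + 1)) k a']
      by_cases hk : k ∈ range (N + 1)
      · rw [if_pos hk]
      · rw [if_neg hk, ha']
        simp only [Finset.mem_range, not_lt] at hk
        simp only [dif_neg (by omega : ¬ k < N + 1)]
    have hdegp : p.natDegree < N + 1 := by
      have : p.natDegree ≤ N := by
        rw [hpdef]
        apply Polynomial.natDegree_sum_le_of_forall_le
        intro i hi
        refine le_trans (Polynomial.natDegree_C_mul_le _ _) ?_
        rw [Polynomial.natDegree_X_pow]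
        simp only [Finset.mem_range] at hi
        omega
      omega
    have ha'eq : ∀ i : Fin (N + 1), a i = a' (i : ℕ) := by
      intro i
      rw [ha']
      simp only [dif_pos i.isLt, Fin.eta]
    have hlam1 : lam N = ∫ x, (p.eval x) ^ 2 ∂μ := by
      rw [hval, ← hankel_eq_integral μ hmom s hs p (N + 1) hdegp]
      rw [← Fin.sum_univ_eq_sum_range
        (fun i => ∑ j ∈ range (N + 1), s (i + j) * p.coeff i * p.coeff j) (N + 1)]
      refine Finset.sum_congr rfl fun i _ => ?_
      rw [← Fin.sum_univ_eq_sum_range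
        (fun j => s ((i : ℕ) + j) * p.coeff (i : ℕ) * p.coeff j) (N + 1)]
      refine Finset.sum_congr rfl fun j _ => ?_
      rw [hcoeff, hcoeff, ha'eq i, ha'eq j]
    obtain ⟨β, hβ⟩ := exists_expansion P hdeg hlead (N + 1) p (Or.inr hdegp)
    have hlam2 : lam N = ∑ n ∈ range (N + 1), β n ^ 2 := by
      rw [hlam1, hβ]
      exact integral_sq_expansion μ hmom P horth _ β
    set v : L2 := elt β (range (N + 1)) with hv
    have hTv : T v = elt a' (range (N + 1)) := by
      apply lp.ext
      funext k
      have h1 : T v = ∑ n ∈ range (N + 1), β n • T (sgl n) := by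
        rw [hv, elt, map_sum]
        exact Finset.sum_congr rfl fun n _ => by rw [T.map_smul]
      rw [h1, lp.coeFn_sum]
      simp only [Finset.sum_apply, lp.coeFn_smul, Pi.smul_apply, smul_eq_mul]
      have h2 : ∀ n ∈ range (N + 1), β n * (T (sgl n) : ∀ _ : ℕ, ℝ) k
          = β n * (P n).coeff k := by
        intro n _
        rw [sgl, hTval k n]
      rw [Finset.sum_congr rfl h2, elt_apply]
      have h3 : ∑ n ∈ range (N + 1), β n * (P n).coeff k = p.coeff k := by
        rw [hβ, Polynomial.finset_sum_coeff]
        exact Finset.sum_congr rfl fun n _ => by rw [Polynomial.coeff_C_mul]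
      rw [h3, hcoeff]
      by_cases hk : k ∈ range (N + 1)
      · rw [if_pos hk]
      · rw [if_neg hk, ha']
        simp only [Finset.mem_range, not_lt] at hk
        simp only [dif_neg (by omega : ¬ k < N + 1)]
    have hnormTv : ‖T v‖ = 1 := by
      have h4 : ‖T v‖ ^ 2 = 1 := by
        rw [hTv, norm_elt_sq, ← Fin.sum_univ_eq_sum_range (fun k => a' k ^ 2) (N + 1), ← ha1]
        exact Finset.sum_congr rfl fun i _ => by rw [ha'eq i]
      have h5 := congrArg Real.sqrt h4
      rwa [Real.sqrt_sq (norm_nonneg _), Real.sqrt_one] at h5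
    have hnormv : ‖v‖ ^ 2 = ∑ n ∈ range (N + 1), β n ^ 2 := norm_elt_sq β _
    have h6 : 1 ≤ (1 / Real.sqrt c) * ‖v‖ := by
      calc (1 : ℝ) = ‖T v‖ := hnormTv.symm
        _ ≤ ‖T‖ * ‖v‖ := T.le_opNorm v
        _ ≤ (1 / Real.sqrt c) * ‖v‖ := mul_le_mul_of_nonneg_right hTnorm (norm_nonneg v)
    have hsc : 0 < Real.sqrt c := Real.sqrt_pos.mpr hc
    have hsq : Real.sqrt c ≤ ‖v‖ := by
      rw [div_mul_eq_mul_div, one_mul, le_div_iff₀ hsc, one_mul] at h6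
      exact h6
    have h7 : c ≤ ‖v‖ ^ 2 := by
      calc c = (Real.sqrt c) ^ 2 := (Real.sq_sqrt hc.le).symm
        _ ≤ ‖v‖ ^ 2 := pow_le_pow_left₀ (Real.sqrt_nonneg c) hsq 2
    rw [hlam2, ← hnormv]
    exact h7
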